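/- For any nonnegative measurable function f on ℝⁿ and any k ∈ (0, n), if the k-th moment M_k(f) = ∫ f(v)|v|^k dv is finite and the entropy H(f) = ∫ f log f dv is finite (i.e., the positive part integral is finite), then ∫ f|log f| dv is finite; more precisely there exists a constant c(n,k) > 0, independent of f, such that ∫ f(v)|log f(v)| dv ≤ ∫ f(v) log f(v) dv + c(n,k) · M_k(f)^{n/(n+k)}. -/

import Mathlib

open MeasureTheory Real

private lemma ptwise_bound {x t a : ℝ} (hx : 0 ≤ x) (ht : 0 ≤ t) (ha : 0 < a) :
    x * max (-Real.log x) 0 ≤ a * (x * t) + (2 / Real.exp 1) * Real.exp (-(a / 2) * t) := by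
  have hexp : (0:ℝ) < Real.exp (-(a / 2) * t) := Real.exp_pos _
  rcases hx.eq_or_lt with h0 | hx0
  · rw [← h0, zero_mul]; positivity
  rcases le_or_gt (-Real.log x) 0 with hlog | hlog
  · rw [max_eq_right hlog, mul_zero]; positivity
  rw [max_eq_left hlog.le]
  rcases le_or_gt (-Real.log x) (a * t) with hcase | hcase
  · have h1 : x * -Real.log x ≤ x * (a * t) := mul_le_mul_of_nonneg_left hcase hx
    have h2 : (0:ℝ) ≤ (2 / Real.exp 1) * Real.exp (-(a / 2) * t) := by positivity
    nlinarith [h1, h2]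
  · set s := Real.exp (Real.log x / 2) with hs_def
    have hspos : 0 < s := Real.exp_pos _
    have hss : s * s = x := by
      rw [hs_def, ← Real.exp_add, add_halves, Real.exp_log hx0]
    have hls : Real.log x = 2 * Real.log s := by rw [hs_def, Real.log_exp]; ring
    have hsle : s ≤ Real.exp (-(a / 2) * t) := by
      rw [hs_def]; apply Real.exp_le_exp.2; nlinarith
    have key : s * -Real.log s ≤ 1 / Real.exp 1 := by
      have h1 : Real.log (1 / (Real.exp 1 * s)) ≤ 1 / (Real.exp 1 * s) - 1 :=
        Real.log_le_sub_one_of_pos (by positivity)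
      have h2 : Real.log (1 / (Real.exp 1 * s)) = -1 - Real.log s := by
        rw [one_div, Real.log_inv, Real.log_mul (Real.exp_ne_zero 1) hspos.ne', Real.log_exp]
        ring
      rw [h2] at h1
      have h3 : -Real.log s ≤ 1 / (Real.exp 1 * s) := by linarith
      calc s * -Real.log s ≤ s * (1 / (Real.exp 1 * s)) :=
            mul_le_mul_of_nonneg_left h3 hspos.le
        _ = 1 / Real.exp 1 := by field_simp
    have hrhs0 : 0 ≤ a * (x * t) := by positivity
    calc x * -Real.log x = 2 * s * (s * -Real.log s) := by rw [hls, ← hss]; ring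
      _ ≤ 2 * s * (1 / Real.exp 1) := mul_le_mul_of_nonneg_left key (by positivity)
      _ ≤ 2 * Real.exp (-(a / 2) * t) * (1 / Real.exp 1) := by
          have h5 : (0:ℝ) ≤ 1 / Real.exp 1 := by positivity
          nlinarith
      _ = (2 / Real.exp 1) * Real.exp (-(a / 2) * t) := by ring
      _ ≤ a * (x * t) + (2 / Real.exp 1) * Real.exp (-(a / 2) * t) := by linarith

private lemma integrable_exp_neg_norm_rpow (n : ℕ) {b k : ℝ} (hb : 0 < b) (hk : 0 < k) :
    Integrable (fun v : EuclideanSpace ℝ (Fin n) => Real.exp (-b * ‖v‖ ^ k)) := by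
  set r : ℝ := n + 1 with hr
  have hrpos : (0:ℝ) < r := by positivity
  have hfr : (Module.finrank ℝ (EuclideanSpace ℝ (Fin n)) : ℝ) < r := by
    rw [finrank_euclideanSpace_fin]; simp [hr]
  have hint : Integrable (fun v : EuclideanSpace ℝ (Fin n) => (1 + ‖v‖) ^ (-r)) :=
    integrable_one_add_norm hfr
  set m : ℕ := ⌈r / k⌉₊ with hm_def
  have hm : r ≤ (m : ℝ) * k := by
    have h1 : r / k ≤ (m : ℝ) := Nat.le_ceil _
    calc r = (r / k) * k := by field_simp
      _ ≤ (m : ℝ) * k := mul_le_mul_of_nonneg_right h1 hk.le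
  set C : ℝ := (max ((m.factorial : ℝ) / b ^ m) 1) * 2 ^ r with hC_def
  have h2r : (0:ℝ) < (2:ℝ) ^ r := Real.rpow_pos_of_pos two_pos r
  have key : ∀ t : ℝ, 0 ≤ t → Real.exp (-b * t ^ k) ≤ C * (1 + t) ^ (-r) := by
    intro t ht
    have h1t : (0:ℝ) < 1 + t := by linarith
    have hmax1 : (1:ℝ) ≤ max ((m.factorial : ℝ) / b ^ m) 1 := le_max_right _ _
    rcases le_or_gt t 1 with ht1 | ht1
    · have hexple : Real.exp (-b * t ^ k) ≤ 1 := by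
        apply Real.exp_le_one_iff.2
        have : (0:ℝ) ≤ b * t ^ k := mul_nonneg hb.le (Real.rpow_nonneg ht k)
        linarith
      have h2 : (2:ℝ) ^ (-r) ≤ (1 + t) ^ (-r) :=
        Real.rpow_le_rpow_of_nonpos h1t (by linarith) (by linarith)
      have h3 : (2:ℝ) ^ r * (2:ℝ) ^ (-r) = 1 := by
        rw [← Real.rpow_add two_pos, add_neg_cancel, Real.rpow_zero]
      calc Real.exp (-b * t ^ k) ≤ 1 := hexple
        _ = (2:ℝ) ^ r * (2:ℝ) ^ (-r) := h3.symm
        _ ≤ C * (1 + t) ^ (-r) := by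
            rw [hC_def]
            apply mul_le_mul (by nlinarith) h2 (by positivity) (by positivity)
    · have htpos : (0:ℝ) < t := lt_trans one_pos ht1
      set X : ℝ := t ^ k with hX_def
      have hX : 0 < X := Real.rpow_pos_of_pos htpos k
      have hfac : (0:ℝ) < (m.factorial : ℝ) := Nat.cast_pos.2 m.factorial_pos
      have hbX : 0 < b * X := by positivity
      have step1 : Real.exp (-b * X) ≤ (m.factorial : ℝ) / (b * X) ^ m := by
        have h := Real.pow_div_factorial_le_exp (x := b * X) hbX.le m
        have h2 := (div_le_iff₀ hfac).mp h
        rw [show -b * X = -(b * X) by ring, Real.exp_neg, inv_eq_one_div,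
          div_le_div_iff₀ (Real.exp_pos _) (pow_pos hbX m)]
        nlinarith [h2]
      have hXr : t ^ r ≤ X ^ m := by
        have h1 : X ^ m = t ^ (k * (m:ℝ)) := by
          rw [hX_def, ← Real.rpow_natCast (t ^ k) m, ← Real.rpow_mul htpos.le]
        rw [h1]
        exact Real.rpow_le_rpow_of_exponent_le ht1.le (by nlinarith)
      have hA : (1 + t) ^ r ≤ (2:ℝ) ^ r * t ^ r := by
        rw [← Real.mul_rpow (by norm_num) htpos.le]
        exact Real.rpow_le_rpow h1t.le (by linarith) hrpos.le
      have hB : (t ^ r)⁻¹ ≤ (2:ℝ) ^ r * ((1 + t) ^ r)⁻¹ := by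
        have htr : (0:ℝ) < t ^ r := Real.rpow_pos_of_pos htpos r
        calc (t ^ r)⁻¹ = (2:ℝ) ^ r * ((2:ℝ) ^ r * t ^ r)⁻¹ := by field_simp
          _ ≤ (2:ℝ) ^ r * ((1 + t) ^ r)⁻¹ := by gcongr
      calc Real.exp (-b * t ^ k) ≤ (m.factorial : ℝ) / (b * X) ^ m := step1
        _ = ((m.factorial : ℝ) / b ^ m) * (X ^ m)⁻¹ := by
            rw [mul_pow, div_mul_eq_div_div, div_eq_mul_inv]
        _ ≤ ((m.factorial : ℝ) / b ^ m) * (t ^ r)⁻¹ := by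
            gcongr
        _ ≤ ((m.factorial : ℝ) / b ^ m) * ((2:ℝ) ^ r * ((1 + t) ^ r)⁻¹) :=
            mul_le_mul_of_nonneg_left hB (by positivity)
        _ = ((m.factorial : ℝ) / b ^ m * 2 ^ r) * ((1 + t) ^ r)⁻¹ := by ring
        _ ≤ C * (1 + t) ^ (-r) := by
            rw [Real.rpow_neg h1t.le, hC_def]
            exact mul_le_mul_of_nonneg_right
              (mul_le_mul_of_nonneg_right (le_max_left _ _) h2r.le) (by positivity)
  refine (hint.const_mul C).mono' ?_ ?_
  · apply Measurable.aestronglyMeasurable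
    fun_prop
  · filter_upwards with v
    rw [Real.norm_eq_abs, abs_of_pos (Real.exp_pos _)]
    exact key ‖v‖ (norm_nonneg v)

/-- For any measurable nonnegative `f` on `ℝⁿ` and `k ∈ (0,n)`: if the `k`-th moment
and the positive part of the entropy are finite, then `∫ f |log f|` is finite and
`∫ f |log f| ≤ ∫ f log f + c(n,k) (∫ f |v|^k)^(n/(n+k))`. -/
theorem entropy_modulus_bound (n : ℕ) (hn : 0 < n) (k : ℝ) (hk : 0 < k) (hkn : k < n) :
    ∃ c : ℝ, 0 < c ∧
      ∀ f : EuclideanSpace ℝ (Fin n) → ℝ, Measurable f → (∀ v, 0 ≤ f v) →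
        Integrable (fun v => f v * ‖v‖ ^ k) →
        Integrable (fun v => f v * max (Real.log (f v)) 0) →
        Integrable (fun v => f v * |Real.log (f v)|) ∧
          ∫ v, f v * |Real.log (f v)| ≤
            (∫ v, f v * Real.log (f v)) +
              c * (∫ v, f v * ‖v‖ ^ k) ^ (n / (n + k)) := by
  haveI : Nontrivial (EuclideanSpace ℝ (Fin n)) := by
    have : Nonempty (Fin n) := ⟨⟨0, hn⟩⟩
    infer_instance
  have hI1 : Integrable (fun v : EuclideanSpace ℝ (Fin n) => Real.exp (-(1/2) * ‖v‖ ^ k)) :=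
    integrable_exp_neg_norm_rpow n (by norm_num) hk
  set I₁ : ℝ := ∫ v : EuclideanSpace ℝ (Fin n), Real.exp (-(1/2) * ‖v‖ ^ k) with hI₁def
  have hI1pos : 0 < I₁ := integral_exp_pos hI1
  refine ⟨2 * (1 + (2 / Real.exp 1) * I₁), by positivity, ?_⟩
  intro f hf hf0 hMint hPint
  have hnk : (0:ℝ) < (n:ℝ) + k := by positivity
  set M : ℝ := ∫ v, f v * ‖v‖ ^ k with hMdef
  have hM0 : 0 ≤ M :=
    integral_nonneg fun v => mul_nonneg (hf0 v) (Real.rpow_nonneg (norm_nonneg v) k)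
  have hmeasg : Measurable fun v : EuclideanSpace ℝ (Fin n) =>
      f v * max (-Real.log (f v)) 0 :=
    hf.mul (((Real.measurable_log.comp hf).neg).max measurable_const)
  have main : Integrable (fun v => f v * max (-Real.log (f v)) 0) ∧
      (∫ v, f v * max (-Real.log (f v)) 0) ≤
        (1 + (2 / Real.exp 1) * I₁) * M ^ ((n:ℝ) / ((n:ℝ) + k)) := by
    rcases hM0.eq_or_lt with hM | hM
    · -- M = 0 case
      have hfz : (fun v => f v * ‖v‖ ^ k) =ᵐ[volume] 0 :=
        (integral_eq_zero_iff_of_nonneg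
          (fun v => mul_nonneg (hf0 v) (Real.rpow_nonneg (norm_nonneg v) k)) hMint).1 hM.symm
      have hne : ∀ᵐ v : EuclideanSpace ℝ (Fin n), v ≠ 0 :=
        compl_mem_ae_iff.mpr (measure_singleton 0)
      have hfz' : f =ᵐ[volume] 0 := by
        filter_upwards [hfz, hne] with v h1 h2
        have hnv : (0:ℝ) < ‖v‖ ^ k := Real.rpow_pos_of_pos (norm_pos_iff.mpr h2) k
        simp only [Pi.zero_apply] at h1 ⊢
        rcases mul_eq_zero.1 h1 with h | h
        · exact h
        · exact absurd h hnv.ne'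
      have hgz : (fun v => f v * max (-Real.log (f v)) 0) =ᵐ[volume] 0 := by
        filter_upwards [hfz'] with v hv
        simp [hv]
      constructor
      · exact (integrable_zero _ _ _).congr hgz.symm
      · have hz : (∫ v, f v * max (-Real.log (f v)) 0) = 0 := by
          rw [integral_congr_ae hgz]; simp
        rw [hz, ← hM, Real.zero_rpow (by positivity : (n:ℝ) / ((n:ℝ) + k) ≠ 0)]
        simp
    · -- 0 < M
      set a : ℝ := M ^ (-(k / ((n:ℝ) + k))) with hadef
      have ha : 0 < a := Real.rpow_pos_of_pos hM _
      have hIa : Integrable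
          (fun v : EuclideanSpace ℝ (Fin n) => Real.exp (-(a/2) * ‖v‖ ^ k)) :=
        integrable_exp_neg_norm_rpow n (by positivity) hk
      have hbound : ∀ v, f v * max (-Real.log (f v)) 0 ≤
          a * (f v * ‖v‖ ^ k) + (2 / Real.exp 1) * Real.exp (-(a/2) * ‖v‖ ^ k) :=
        fun v => ptwise_bound (hf0 v) (Real.rpow_nonneg (norm_nonneg v) k) ha
      have hh : Integrable (fun v => a * (f v * ‖v‖ ^ k) +
          (2 / Real.exp 1) * Real.exp (-(a/2) * ‖v‖ ^ k)) :=
        (hMint.const_mul a).add (hIa.const_mul _)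
      have hgint : Integrable (fun v => f v * max (-Real.log (f v)) 0) := by
        refine hh.mono' hmeasg.aestronglyMeasurable ?_
        filter_upwards with v
        rw [Real.norm_eq_abs, abs_of_nonneg (mul_nonneg (hf0 v) (le_max_right _ _))]
        exact hbound v
      refine ⟨hgint, ?_⟩
      have h1 : (∫ v, f v * max (-Real.log (f v)) 0) ≤
          ∫ v, (a * (f v * ‖v‖ ^ k) + (2 / Real.exp 1) * Real.exp (-(a/2) * ‖v‖ ^ k)) :=
        integral_mono hgint hh hbound
      have h2 : (∫ v, (a * (f v * ‖v‖ ^ k) +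
            (2 / Real.exp 1) * Real.exp (-(a/2) * ‖v‖ ^ k))) =
          a * M + (2 / Real.exp 1) *
            ∫ v : EuclideanSpace ℝ (Fin n), Real.exp (-(a/2) * ‖v‖ ^ k) := by
        rw [integral_add (hMint.const_mul a) (hIa.const_mul _), integral_const_mul,
          integral_const_mul]
      -- scaling
      set R : ℝ := a ^ (1/k) with hRdef
      have hR : 0 < R := Real.rpow_pos_of_pos ha _
      have hRk : R ^ k = a := by
        rw [hRdef, ← Real.rpow_mul ha.le, one_div, inv_mul_cancel₀ hk.ne', Real.rpow_one]
      have hcomp : ∀ v : EuclideanSpace ℝ (Fin n),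
          Real.exp (-(1/2) * ‖R • v‖ ^ k) = Real.exp (-(a/2) * ‖v‖ ^ k) := by
        intro v
        congr 1
        rw [norm_smul, Real.norm_eq_abs, abs_of_pos hR,
          Real.mul_rpow hR.le (norm_nonneg v), hRk]
        ring
      have h3 : (∫ v : EuclideanSpace ℝ (Fin n), Real.exp (-(a/2) * ‖v‖ ^ k)) =
          a ^ (-((n:ℝ) / k)) * I₁ := by
        have key := MeasureTheory.Measure.integral_comp_smul
          (volume : Measure (EuclideanSpace ℝ (Fin n)))
          (fun v => Real.exp (-(1/2) * ‖v‖ ^ k)) R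
        simp only [hcomp] at key
        rw [key, finrank_euclideanSpace_fin, smul_eq_mul]
        congr 1
        rw [abs_of_pos (by positivity), hRdef, ← Real.rpow_natCast (a ^ (1/k)) n,
          ← Real.rpow_mul ha.le, ← Real.rpow_neg ha.le]
        congr 1
        ring
      have e1 : a * M = M ^ ((n:ℝ) / ((n:ℝ) + k)) := by
        have he : -(k / ((n:ℝ) + k)) + 1 = (n:ℝ) / ((n:ℝ) + k) := by field_simp; ring
        rw [hadef, ← Real.rpow_add_one hM.ne', he]
      have e2 : a ^ (-((n:ℝ) / k)) = M ^ ((n:ℝ) / ((n:ℝ) + k)) := by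
        rw [hadef, ← Real.rpow_mul hM.le]
        congr 1
        field_simp
      calc (∫ v, f v * max (-Real.log (f v)) 0) ≤
            a * M + (2 / Real.exp 1) * (a ^ (-((n:ℝ) / k)) * I₁) := by
              rw [← h3, ← h2]; exact h1
        _ = (1 + (2 / Real.exp 1) * I₁) * M ^ ((n:ℝ) / ((n:ℝ) + k)) := by
              rw [e1, e2]; ring
  obtain ⟨hgint, hgle⟩ := main
  have habs : ∀ v, f v * |Real.log (f v)| =
      f v * max (Real.log (f v)) 0 + f v * max (-Real.log (f v)) 0 := by
    intro v
    rcases le_total (Real.log (f v)) 0 with h | h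
    · rw [abs_of_nonpos h, max_eq_right h, max_eq_left (by linarith)]; ring
    · rw [abs_of_nonneg h, max_eq_left h, max_eq_right (by linarith)]; ring
  have hsign : ∀ v, f v * Real.log (f v) =
      f v * max (Real.log (f v)) 0 - f v * max (-Real.log (f v)) 0 := by
    intro v
    rcases le_total (Real.log (f v)) 0 with h | h
    · rw [max_eq_right h, max_eq_left (by linarith)]; ring
    · rw [max_eq_left h, max_eq_right (by linarith)]; ring
  have hint_abs : Integrable (fun v => f v * |Real.log (f v)|) :=
    (hPint.add hgint).congr (Filter.Eventually.of_forall fun v => (habs v).symm)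
  refine ⟨hint_abs, ?_⟩
  have hIeq : (∫ v, f v * |Real.log (f v)|) =
      (∫ v, f v * max (Real.log (f v)) 0) + ∫ v, f v * max (-Real.log (f v)) 0 := by
    rw [← integral_add hPint hgint]
    exact integral_congr_ae (Filter.Eventually.of_forall fun v => habs v)
  have hIeq2 : (∫ v, f v * Real.log (f v)) =
      (∫ v, f v * max (Real.log (f v)) 0) - ∫ v, f v * max (-Real.log (f v)) 0 := by
    rw [← integral_sub hPint hgint]
    exact integral_congr_ae (Filter.Eventually.of_forall fun v => hsign v)
  rw [hIeq, hIeq2]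
  have hc : (2 * (1 + (2 / Real.exp 1) * I₁)) * M ^ ((n:ℝ) / ((n:ℝ) + k)) =
      2 * ((1 + (2 / Real.exp 1) * I₁) * M ^ ((n:ℝ) / ((n:ℝ) + k))) := by ring
  rw [hc]
  linarith [hgle]
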